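/- Let φ_1,...,φ_n ∈ ℂ be nonzero and pairwise distinct, and r = Σ_{i≠j} (1/(φ_i-φ_j)) (φ_i e^i_j - φ_j e^j_j) ⊗ (e^j_i - e^i_i). Then r satisfies the non-homogeneous associative classical Yang–Baxter equation r^{13} r^{12} - r^{12} r^{23} + r^{23} r^{13} = -r^{13}. -/

import Mathlib

open Matrix Kronecker BigOperators Finset

noncomputable section


/-- The classical r-matrix `r = Σ_{i≠j} (φ_i-φ_j)⁻¹ (φ_i e^i_j - φ_j e^j_j) ⊗ (e^j_i - e^i_i)`,
viewed as an operator on ℂⁿ⊗ℂⁿ via the Kronecker product. -/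
def rPhi (n : ℕ) (φ : Fin n → ℂ) : Matrix (Fin n × Fin n) (Fin n × Fin n) ℂ :=
  ∑ i : Fin n, ∑ j : Fin n, if i ≠ j then
    (φ i - φ j)⁻¹ • ((φ i • single i j (1:ℂ) - φ j • single j j (1:ℂ)) ⊗ₖ
      (single j i (1:ℂ) - single i i (1:ℂ))) else 0

/-- `r ⊗ 1` acting on the first two factors of ℂⁿ⊗ℂⁿ⊗ℂⁿ. -/
def op12 (n : ℕ) (r : Matrix (Fin n × Fin n) (Fin n × Fin n) ℂ) :
    Matrix (Fin n × Fin n × Fin n) (Fin n × Fin n × Fin n) ℂ := fun p q =>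
  r (p.1, p.2.1) (q.1, q.2.1) * (if p.2.2 = q.2.2 then 1 else 0)

/-- `1 ⊗ r` acting on the last two factors of ℂⁿ⊗ℂⁿ⊗ℂⁿ. -/
def op23 (n : ℕ) (r : Matrix (Fin n × Fin n) (Fin n × Fin n) ℂ) :
    Matrix (Fin n × Fin n × Fin n) (Fin n × Fin n × Fin n) ℂ := fun p q =>
  r p.2 q.2 * (if p.1 = q.1 then 1 else 0)

/-- `r` acting on the first and third factors of ℂⁿ⊗ℂⁿ⊗ℂⁿ. -/
def op13 (n : ℕ) (r : Matrix (Fin n × Fin n) (Fin n × Fin n) ℂ) :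
    Matrix (Fin n × Fin n × Fin n) (Fin n × Fin n × Fin n) ℂ := fun p q =>
  r (p.1, p.2.2) (q.1, q.2.2) * (if p.2.1 = q.2.1 then 1 else 0)


def dl {n : ℕ} (i j : Fin n) : ℂ := if i = j then 1 else 0

lemma dl_self {n : ℕ} (i : Fin n) : dl i i = 1 := by simp [dl]

lemma dl_of_ne {n : ℕ} {i j : Fin n} (h : i ≠ j) : dl i j = 0 := by simp [dl, h]

def Rm (n : ℕ) (φ : Fin n → ℂ) (a b c d : Fin n) : ℂ :=
  if c = d then 0 else
    (φ d - φ c)⁻¹ * (φ d * dl a d - φ c * dl a c) * (dl b c - dl b d)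

variable {n : ℕ} {φ : Fin n → ℂ}

lemma Rm_self (a b c : Fin n) : Rm n φ a b c c = 0 := by simp [Rm]

lemma Rm_zero_left {u x y : Fin n} (hx : u ≠ x) (hy : u ≠ y) (b : Fin n) :
    Rm n φ u b x y = 0 := by simp [Rm, dl_of_ne hx, dl_of_ne hy]

lemma Rm_zero_right {w x z : Fin n} (hx : w ≠ x) (hz : w ≠ z) (a : Fin n) :
    Rm n φ a w x z = 0 := by simp [Rm, dl_of_ne hx, dl_of_ne hz]

lemma sum_support_two {x y : Fin n} (hxy : x ≠ y) (f : Fin n → ℂ)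
    (h : ∀ u, u ≠ x → u ≠ y → f u = 0) : ∑ u, f u = f x + f y := by
  rw [← Finset.sum_subset (Finset.subset_univ {x, y})]
  · rw [Finset.sum_pair hxy]
  · intro u _ hu
    simp only [Finset.mem_insert, Finset.mem_singleton, not_or] at hu
    exact h u hu.1 hu.2

set_option maxHeartbeats 1600000 in
private lemma key (hd : ∀ i j, i ≠ j → φ i ≠ φ j) (a b c x y z : Fin n) :
    (∑ u, Rm n φ a c u z * Rm n φ u b x y) - (∑ v, Rm n φ a b x v * Rm n φ v c y z)
      + (∑ w, Rm n φ b c y w * Rm n φ a w x z)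
    = -(Rm n φ a c x z * dl b y) := by
  by_cases hxy : x = y
  · subst hxy
    by_cases hxz : x = z
    · subst hxz
      simp [Rm_self]
    · -- y = x, x ≠ z
      have h1 : φ z - φ x ≠ 0 := sub_ne_zero.mpr (hd z x (Ne.symm hxz))
      have h1' : φ x - φ z ≠ 0 := sub_ne_zero.mpr (hd x z hxz)
      have hS1 : (∑ u, Rm n φ a c u z * Rm n φ u b x x) = 0 := by simp [Rm_self]
      have hS2 : (∑ v, Rm n φ a b x v * Rm n φ v c x z)
          = Rm n φ a b x x * Rm n φ x c x z + Rm n φ a b x z * Rm n φ z c x z :=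
        sum_support_two hxz _ (fun v hx hz => by rw [Rm_zero_left hx hz, mul_zero])
      have hS3 : (∑ w, Rm n φ b c x w * Rm n φ a w x z)
          = Rm n φ b c x x * Rm n φ a x x z + Rm n φ b c x z * Rm n φ a z x z :=
        sum_support_two hxz _ (fun w hx hz => by rw [Rm_zero_right hx hz, mul_zero])
      rw [hS1, hS2, hS3]
      simp only [Rm, if_neg hxz, if_neg (Ne.symm hxz), dl_self, dl_of_ne hxz, dl_of_ne (Ne.symm hxz)]
      field_simp [h1, h1']
      simp only [ite_true]
      ring
  · by_cases hyz : y = z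
    · subst hyz
      -- x ≠ y, y = z
      have h1 : φ y - φ x ≠ 0 := sub_ne_zero.mpr (hd y x (fun h => hxy h.symm))
      have h1' : φ x - φ y ≠ 0 := sub_ne_zero.mpr (hd x y hxy)
      have hS1 : (∑ u, Rm n φ a c u y * Rm n φ u b x y)
          = Rm n φ a c x y * Rm n φ x b x y + Rm n φ a c y y * Rm n φ y b x y :=
        sum_support_two hxy _ (fun u hx hy => by rw [Rm_zero_left hx hy, mul_zero])
      have hS2 : (∑ v, Rm n φ a b x v * Rm n φ v c y y) = 0 := by simp [Rm_self]
      have hS3 : (∑ w, Rm n φ b c y w * Rm n φ a w x y)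
          = Rm n φ b c y x * Rm n φ a x x y + Rm n φ b c y y * Rm n φ a y x y :=
        sum_support_two hxy _ (fun w hx hy => by rw [Rm_zero_right hx hy, mul_zero])
      rw [hS1, hS2, hS3]
      simp only [Rm, if_neg hxy, if_neg (Ne.symm hxy), dl_self, dl_of_ne hxy, dl_of_ne (Ne.symm hxy)]
      field_simp [h1, h1']
      simp only [ite_true]
      ring
    · by_cases hxz : x = z
      · subst hxz
        -- x = z, x ≠ y, y ≠ x
        have h1 : φ y - φ x ≠ 0 := sub_ne_zero.mpr (hd y x (fun h => hxy h.symm))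
        have h1' : φ x - φ y ≠ 0 := sub_ne_zero.mpr (hd x y hxy)
        have hS1 : (∑ u, Rm n φ a c u x * Rm n φ u b x y)
            = Rm n φ a c x x * Rm n φ x b x y + Rm n φ a c y x * Rm n φ y b x y :=
          sum_support_two hxy _ (fun u hx hy => by rw [Rm_zero_left hx hy, mul_zero])
        have hS2 : (∑ v, Rm n φ a b x v * Rm n φ v c y x)
            = Rm n φ a b x y * Rm n φ y c y x + Rm n φ a b x x * Rm n φ x c y x :=
          sum_support_two hyz _ (fun v hy hz => by rw [Rm_zero_left hy hz, mul_zero])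
        have hS3 : (∑ w, Rm n φ b c y w * Rm n φ a w x x) = 0 := by simp [Rm_self]
        rw [hS1, hS2, hS3]
        simp only [Rm, if_neg hxy, if_neg (Ne.symm hxy), if_neg hyz, if_neg (Ne.symm hyz), dl_self, dl_of_ne hxy, dl_of_ne (Ne.symm hxy), dl_of_ne hyz, dl_of_ne (Ne.symm hyz)]
        field_simp [h1, h1']
        simp only [ite_true]
        ring
      · -- generic: x, y, z pairwise distinct
        have h1 : φ y - φ x ≠ 0 := sub_ne_zero.mpr (hd y x (fun h => hxy h.symm))
        have h2 : φ z - φ y ≠ 0 := sub_ne_zero.mpr (hd z y (fun h => hyz h.symm))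
        have h3 : φ z - φ x ≠ 0 := sub_ne_zero.mpr (hd z x (fun h => hxz h.symm))
        have h1' : φ x - φ y ≠ 0 := sub_ne_zero.mpr (hd x y hxy)
        have h2' : φ y - φ z ≠ 0 := sub_ne_zero.mpr (hd y z hyz)
        have h3' : φ x - φ z ≠ 0 := sub_ne_zero.mpr (hd x z hxz)
        have hS1 : (∑ u, Rm n φ a c u z * Rm n φ u b x y)
            = Rm n φ a c x z * Rm n φ x b x y + Rm n φ a c y z * Rm n φ y b x y :=
          sum_support_two hxy _ (fun u hx hy => by rw [Rm_zero_left hx hy, mul_zero])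
        have hS2 : (∑ v, Rm n φ a b x v * Rm n φ v c y z)
            = Rm n φ a b x y * Rm n φ y c y z + Rm n φ a b x z * Rm n φ z c y z :=
          sum_support_two hyz _ (fun v hy hz => by rw [Rm_zero_left hy hz, mul_zero])
        have hS3 : (∑ w, Rm n φ b c y w * Rm n φ a w x z)
            = Rm n φ b c y x * Rm n φ a x x z + Rm n φ b c y z * Rm n φ a z x z :=
          sum_support_two hxz _ (fun w hx hz => by rw [Rm_zero_right hx hz, mul_zero])
        rw [hS1, hS2, hS3]
        simp only [Rm, if_neg hxy, if_neg (Ne.symm hxy), if_neg hyz, if_neg (Ne.symm hyz), if_neg hxz, if_neg (Ne.symm hxz), dl_self, dl_of_ne hxy, dl_of_ne (Ne.symm hxy), dl_of_ne hyz, dl_of_ne (Ne.symm hyz), dl_of_ne hxz, dl_of_ne (Ne.symm hxz)]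
        have e1 : (φ y - φ x) * (φ y - φ x)⁻¹ = 1 := mul_inv_cancel₀ h1
        have e2 : (φ z - φ y) * (φ z - φ y)⁻¹ = 1 := mul_inv_cancel₀ h2
        have e3 : (φ z - φ x) * (φ z - φ x)⁻¹ = 1 := mul_inv_cancel₀ h3
        have e4 : (φ x - φ y) * (φ x - φ y)⁻¹ = 1 := mul_inv_cancel₀ h1'
        apply mul_left_cancel₀ (mul_ne_zero (mul_ne_zero (mul_ne_zero h1 h2) h3) h1')
        linear_combination (-φ y ^ 2 * φ z ^ 3 * dl a z * dl b y * dl c z * (φ z - φ y)⁻¹ + φ y ^ 2 * φ z ^ 3 * dl a z * dl b y * dl c y * (φ z - φ y)⁻¹ + φ y ^ 2 * φ z ^ 3 * dl a z * dl b x * dl c z * (φ z - φ y)⁻¹ - φ y ^ 2 * φ z ^ 3 * dl a z * dl b x * dl c y * (φ z - φ y)⁻¹ + φ y ^ 3 * φ z ^ 2 * dl a z * dl b y * dl c z * (φ z - φ y)⁻¹ - φ y ^ 3 * φ z ^ 2 * dl a z * dl b y * dl c y * (φ z - φ y)⁻¹ - φ y ^ 3 * φ z ^ 2 * dl a z * dl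 b x * dl c z * (φ z - φ y)⁻¹ + φ y ^ 3 * φ z ^ 2 * dl a z * dl b x * dl c y * (φ z - φ y)⁻¹ + φ x * φ y * φ z ^ 3 * dl a z * dl b y * dl c z * (φ z - φ x)⁻¹ + φ x * φ y * φ z ^ 3 * dl a z * dl b y * dl c z * (φ z - φ y)⁻¹ - φ x * φ y * φ z ^ 3 * dl a z * dl b y * dl c y * (φ z - φ y)⁻¹ - φ x * φ y * φ z ^ 3 * dl a z * dl b y * dl c x * (φ z - φ x)⁻¹ - φ x * φ y * φ z ^ 3 * dl a z * dl b x * dl c z * (φ z - φ x)⁻¹ - φ x * φ y * φ z ^ 3 * dl a z * dl b x * dl c z * (φ z - φ y)⁻¹ + φ x * φ y * φ z ^ 3 * dl a z * dl b x * dl c y * (φ z - φ y)⁻¹ + φ x * φ y * φ z ^ 3 * dl a z * dl b x * dl c x * (φ z - φ x)⁻¹ - φ x * φ y ^ 2 * φ z ^ 2 * dl a z * dl b y * dl c z * (φ z - φ x)⁻¹ + φ x * φ y ^ 2 * φ z ^ 2 * dl a z * dl b y * dl c x * (φ z - φ x)⁻¹ + φ x * φ y ^ 2 * φ z ^ 2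 * dl a z * dl b x * dl c z * (φ z - φ x)⁻¹ - φ x * φ y ^ 2 * φ z ^ 2 * dl a z * dl b x * dl c x * (φ z - φ x)⁻¹ + φ x * φ y ^ 2 * φ z ^ 2 * dl a x * dl b y * dl c z * (φ z - φ y)⁻¹ - φ x * φ y ^ 2 * φ z ^ 2 * dl a x * dl b y * dl c y * (φ z - φ y)⁻¹ - φ x * φ y ^ 2 * φ z ^ 2 * dl a x * dl b x * dl c z * (φ z - φ y)⁻¹ + φ x * φ y ^ 2 * φ z ^ 2 * dl a x * dl b x * dl c y * (φ z - φ y)⁻¹ - φ x * φ y ^ 3 * φ z * dl a z * dl b y * dl c z * (φ z - φ y)⁻¹ + φ x * φ y ^ 3 * φ z * dl a z * dl b y * dl c y * (φ z - φ y)⁻¹ + φ x * φ y ^ 3 * φ z * dl a z * dl b x * dl c z * (φ z - φ y)⁻¹ - φ x * φ y ^ 3 * φ z * dl a z * dl b x * dl c y * (φ z - φ y)⁻¹ - φ x * φ y ^ 3 * φ z * dl a x * dl b y * dl c z * (φ z - φ y)⁻¹ + φ x * φ y ^ 3 * φ z * dl a x * dl b y * dl c y * (φ z - φ y)⁻¹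 + φ x * φ y ^ 3 * φ z * dl a x * dl b x * dl c z * (φ z - φ y)⁻¹ - φ x * φ y ^ 3 * φ z * dl a x * dl b x * dl c y * (φ z - φ y)⁻¹ - φ x ^ 2 * φ z ^ 3 * dl a z * dl b y * dl c z * (φ z - φ x)⁻¹ + φ x ^ 2 * φ z ^ 3 * dl a z * dl b y * dl c x * (φ z - φ x)⁻¹ + φ x ^ 2 * φ z ^ 3 * dl a z * dl b x * dl c z * (φ z - φ x)⁻¹ - φ x ^ 2 * φ z ^ 3 * dl a z * dl b x * dl c x * (φ z - φ x)⁻¹ - φ x ^ 2 * φ y * φ z ^ 2 * dl a z * dl b y * dl c z * (φ z - φ y)⁻¹ + φ x ^ 2 * φ y * φ z ^ 2 * dl a z * dl b y * dl c y * (φ z - φ y)⁻¹ + φ x ^ 2 * φ y * φ z ^ 2 * dl a z * dl b x * dl c z * (φ z - φ y)⁻¹ - φ x ^ 2 * φ y * φ z ^ 2 * dl a z * dl b x * dl c y * (φ z - φ y)⁻¹ - φ x ^ 2 * φ y * φ z ^ 2 * dl a x * dl b y * dl c z * (φ z - φ x)⁻¹ - φ x ^ 2 * φ y * φ z ^ 2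 * dl a x * dl b y * dl c z * (φ z - φ y)⁻¹ + φ x ^ 2 * φ y * φ z ^ 2 * dl a x * dl b y * dl c y * (φ z - φ y)⁻¹ + φ x ^ 2 * φ y * φ z ^ 2 * dl a x * dl b y * dl c x * (φ z - φ x)⁻¹ + φ x ^ 2 * φ y * φ z ^ 2 * dl a x * dl b x * dl c z * (φ z - φ x)⁻¹ + φ x ^ 2 * φ y * φ z ^ 2 * dl a x * dl b x * dl c z * (φ z - φ y)⁻¹ - φ x ^ 2 * φ y * φ z ^ 2 * dl a x * dl b x * dl c y * (φ z - φ y)⁻¹ - φ x ^ 2 * φ y * φ z ^ 2 * dl a x * dl b x * dl c x * (φ z - φ x)⁻¹ + φ x ^ 2 * φ y ^ 2 * φ z * dl a z * dl b y * dl c z * (φ z - φ x)⁻¹ + φ x ^ 2 * φ y ^ 2 * φ z * dl a z * dl b y * dl c z * (φ z - φ y)⁻¹ - φ x ^ 2 * φ y ^ 2 * φ z * dl a z * dl b y * dl c y * (φ z - φ y)⁻¹ - φ x ^ 2 * φ y ^ 2 * φ z * dl a z * dl b y * dl c x * (φ z - φ x)⁻¹ - φ x ^ 2 * φ y ^ 2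 * φ z * dl a z * dl b x * dl c z * (φ z - φ x)⁻¹ - φ x ^ 2 * φ y ^ 2 * φ z * dl a z * dl b x * dl c z * (φ z - φ y)⁻¹ + φ x ^ 2 * φ y ^ 2 * φ z * dl a z * dl b x * dl c y * (φ z - φ y)⁻¹ + φ x ^ 2 * φ y ^ 2 * φ z * dl a z * dl b x * dl c x * (φ z - φ x)⁻¹ + φ x ^ 2 * φ y ^ 2 * φ z * dl a x * dl b y * dl c z * (φ z - φ x)⁻¹ - φ x ^ 2 * φ y ^ 2 * φ z * dl a x * dl b y * dl c x * (φ z - φ x)⁻¹ - φ x ^ 2 * φ y ^ 2 * φ z * dl a x * dl b x * dl c z * (φ z - φ x)⁻¹ + φ x ^ 2 * φ y ^ 2 * φ z * dl a x * dl b x * dl c x * (φ z - φ x)⁻¹ + φ x ^ 2 * φ y ^ 3 * dl a x * dl b y * dl c z * (φ z - φ y)⁻¹ - φ x ^ 2 * φ y ^ 3 * dl a x * dl b y * dl c y * (φ z - φ y)⁻¹ - φ x ^ 2 * φ y ^ 3 * dl a x * dl b x * dl c z * (φ z - φ y)⁻¹ + φ x ^ 2 * φ y ^ 3 * dl a x *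 dl b x * dl c y * (φ z - φ y)⁻¹ + φ x ^ 3 * φ z ^ 2 * dl a z * dl b y * dl c z * (φ z - φ x)⁻¹ - φ x ^ 3 * φ z ^ 2 * dl a z * dl b y * dl c x * (φ z - φ x)⁻¹ - φ x ^ 3 * φ z ^ 2 * dl a z * dl b x * dl c z * (φ z - φ x)⁻¹ + φ x ^ 3 * φ z ^ 2 * dl a z * dl b x * dl c x * (φ z - φ x)⁻¹ + φ x ^ 3 * φ z ^ 2 * dl a x * dl b y * dl c z * (φ z - φ x)⁻¹ - φ x ^ 3 * φ z ^ 2 * dl a x * dl b y * dl c x * (φ z - φ x)⁻¹ - φ x ^ 3 * φ z ^ 2 * dl a x * dl b x * dl c z * (φ z - φ x)⁻¹ + φ x ^ 3 * φ z ^ 2 * dl a x * dl b x * dl c x * (φ z - φ x)⁻¹ - φ x ^ 3 * φ y * φ z * dl a z * dl b y * dl c z * (φ z - φ x)⁻¹ + φ x ^ 3 * φ y * φ z * dl a z * dl b y * dl c x * (φ z - φ x)⁻¹ + φ x ^ 3 * φ y * φ z * dl a z * dl b x * dl c z * (φ z - φ x)⁻¹ - φ x ^ 3 * φ y * φ z *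 dl a z * dl b x * dl c x * (φ z - φ x)⁻¹ + φ x ^ 3 * φ y * φ z * dl a x * dl b y * dl c z * (φ z - φ y)⁻¹ - φ x ^ 3 * φ y * φ z * dl a x * dl b y * dl c y * (φ z - φ y)⁻¹ - φ x ^ 3 * φ y * φ z * dl a x * dl b x * dl c z * (φ z - φ y)⁻¹ + φ x ^ 3 * φ y * φ z * dl a x * dl b x * dl c y * (φ z - φ y)⁻¹ - φ x ^ 3 * φ y ^ 2 * dl a x * dl b y * dl c z * (φ z - φ x)⁻¹ - φ x ^ 3 * φ y ^ 2 * dl a x * dl b y * dl c z * (φ z - φ y)⁻¹ + φ x ^ 3 * φ y ^ 2 * dl a x * dl b y * dl c y * (φ z - φ y)⁻¹ + φ x ^ 3 * φ y ^ 2 * dl a x * dl b y * dl c x * (φ z - φ x)⁻¹ + φ x ^ 3 * φ y ^ 2 * dl a x * dl b x * dl c z * (φ z - φ x)⁻¹ + φ x ^ 3 * φ y ^ 2 * dl a x * dl b x * dl c z * (φ z - φ y)⁻¹ - φ x ^ 3 * φ y ^ 2 * dl a x * dl b x * dl c y * (φ z - φ y)⁻¹ - φ x ^ 3 * φ y ^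 2 * dl a x * dl b x * dl c x * (φ z - φ x)⁻¹ - φ x ^ 4 * φ z * dl a x * dl b y * dl c z * (φ z - φ x)⁻¹ + φ x ^ 4 * φ z * dl a x * dl b y * dl c x * (φ z - φ x)⁻¹ + φ x ^ 4 * φ z * dl a x * dl b x * dl c z * (φ z - φ x)⁻¹ - φ x ^ 4 * φ z * dl a x * dl b x * dl c x * (φ z - φ x)⁻¹ + φ x ^ 4 * φ y * dl a x * dl b y * dl c z * (φ z - φ x)⁻¹ - φ x ^ 4 * φ y * dl a x * dl b y * dl c x * (φ z - φ x)⁻¹ - φ x ^ 4 * φ y * dl a x * dl b x * dl c z * (φ z - φ x)⁻¹ + φ x ^ 4 * φ y * dl a x * dl b x * dl c x * (φ z - φ x)⁻¹) * e1 + (-φ y ^ 2 * φ z ^ 2 * dl a z * dl b y * dl c z + φ y ^ 2 * φ z ^ 2 * dl a z * dl b y * dl c y + φ y ^ 2 * φ z ^ 2 * dl a z * dl b x * dl c z - φ y ^ 2 * φ z ^ 2 * dl a z * dl b x * dl c y - φ y ^ 2 * φ z ^ 3 * dl a z * dl b x * dl c z * (φ z - φ x)⁻¹ + φ y ^ 2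 * φ z ^ 3 * dl a z * dl b x * dl c y * (φ z - φ x)⁻¹ + φ y ^ 3 * φ z ^ 2 * dl a z * dl b y * dl c z * (φ z - φ x)⁻¹ - φ y ^ 3 * φ z ^ 2 * dl a z * dl b y * dl c y * (φ z - φ x)⁻¹ + φ x * φ y * φ z ^ 2 * dl a z * dl b y * dl c z - φ x * φ y * φ z ^ 2 * dl a z * dl b y * dl c y - φ x * φ y * φ z ^ 2 * dl a z * dl b x * dl c z + φ x * φ y * φ z ^ 2 * dl a z * dl b x * dl c y + 2 * φ x * φ y * φ z ^ 3 * dl a z * dl b x * dl c z * (φ z - φ x)⁻¹ - 2 * φ x * φ y * φ z ^ 3 * dl a z * dl b x * dl c y * (φ z - φ x)⁻¹ + φ x * φ y ^ 2 * φ z * dl a z * dl b y * dl c z - φ x * φ y ^ 2 * φ z * dl a z * dl b y * dl c y - φ x * φ y ^ 2 * φ z * dl a z * dl b x * dl c z + φ x * φ y ^ 2 * φ z * dl a z * dl b x * dl c y + φ x * φ y ^ 2 * φ z * dl a x * dl b y * dl c z - φ x * φ y ^ 2 * φ z * dl a x * dl b y * dl c y - φ x * φ y ^ 2 * φ z * dl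 a x * dl b x * dl c z + φ x * φ y ^ 2 * φ z * dl a x * dl b x * dl c y - 2 * φ x * φ y ^ 2 * φ z ^ 2 * dl a z * dl b y * dl c z * (φ z - φ x)⁻¹ + 2 * φ x * φ y ^ 2 * φ z ^ 2 * dl a z * dl b y * dl c y * (φ z - φ x)⁻¹ + φ x * φ y ^ 2 * φ z ^ 2 * dl a z * dl b x * dl c z * (φ z - φ x)⁻¹ - φ x * φ y ^ 2 * φ z ^ 2 * dl a z * dl b x * dl c y * (φ z - φ x)⁻¹ + φ x * φ y ^ 2 * φ z ^ 2 * dl a x * dl b x * dl c z * (φ z - φ x)⁻¹ - φ x * φ y ^ 2 * φ z ^ 2 * dl a x * dl b x * dl c y * (φ z - φ x)⁻¹ - φ x * φ y ^ 3 * φ z * dl a z * dl b y * dl c z * (φ z - φ x)⁻¹ + φ x * φ y ^ 3 * φ z * dl a z * dl b y * dl c y * (φ z - φ x)⁻¹ - φ x * φ y ^ 3 * φ z * dl a x * dl b y * dl c z * (φ z - φ x)⁻¹ + φ x * φ y ^ 3 * φ z * dl a x * dl b y * dl c y * (φ z - φ x)⁻¹ - φ x ^ 2 * φ z ^ 3 *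 dl a z * dl b x * dl c z * (φ z - φ x)⁻¹ + φ x ^ 2 * φ z ^ 3 * dl a z * dl b x * dl c y * (φ z - φ x)⁻¹ - φ x ^ 2 * φ y * φ z * dl a z * dl b y * dl c z + φ x ^ 2 * φ y * φ z * dl a z * dl b y * dl c y + φ x ^ 2 * φ y * φ z * dl a z * dl b x * dl c z - φ x ^ 2 * φ y * φ z * dl a z * dl b x * dl c y - φ x ^ 2 * φ y * φ z * dl a x * dl b y * dl c z + φ x ^ 2 * φ y * φ z * dl a x * dl b y * dl c y + φ x ^ 2 * φ y * φ z * dl a x * dl b x * dl c z - φ x ^ 2 * φ y * φ z * dl a x * dl b x * dl c y + φ x ^ 2 * φ y * φ z ^ 2 * dl a z * dl b y * dl c z * (φ z - φ x)⁻¹ - φ x ^ 2 * φ y * φ z ^ 2 * dl a z * dl b y * dl c y * (φ z - φ x)⁻¹ - 2 * φ x ^ 2 * φ y * φ z ^ 2 * dl a z * dl b x * dl c z * (φ z - φ x)⁻¹ + 2 * φ x ^ 2 * φ y * φ z ^ 2 * dl a z * dl b x * dl c y * (φ z - φ x)⁻¹ - 2 * φ x ^ 2 * φ y * φ z ^ 2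 * dl a x * dl b x * dl c z * (φ z - φ x)⁻¹ + 2 * φ x ^ 2 * φ y * φ z ^ 2 * dl a x * dl b x * dl c y * (φ z - φ x)⁻¹ - φ x ^ 2 * φ y ^ 2 * dl a x * dl b y * dl c z + φ x ^ 2 * φ y ^ 2 * dl a x * dl b y * dl c y + φ x ^ 2 * φ y ^ 2 * dl a x * dl b x * dl c z - φ x ^ 2 * φ y ^ 2 * dl a x * dl b x * dl c y + 2 * φ x ^ 2 * φ y ^ 2 * φ z * dl a z * dl b y * dl c z * (φ z - φ x)⁻¹ - 2 * φ x ^ 2 * φ y ^ 2 * φ z * dl a z * dl b y * dl c y * (φ z - φ x)⁻¹ + 2 * φ x ^ 2 * φ y ^ 2 * φ z * dl a x * dl b y * dl c z * (φ z - φ x)⁻¹ - 2 * φ x ^ 2 * φ y ^ 2 * φ z * dl a x * dl b y * dl c y * (φ z - φ x)⁻¹ - φ x ^ 2 * φ y ^ 2 * φ z * dl a x * dl b x * dl c z * (φ z - φ x)⁻¹ + φ x ^ 2 * φ y ^ 2 * φ z * dl a x * dl b x * dl c y * (φ z - φ x)⁻¹ + φ x ^ 2 * φ y ^ 3 * dl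 a x * dl b y * dl c z * (φ z - φ x)⁻¹ - φ x ^ 2 * φ y ^ 3 * dl a x * dl b y * dl c y * (φ z - φ x)⁻¹ + φ x ^ 3 * φ z ^ 2 * dl a z * dl b x * dl c z * (φ z - φ x)⁻¹ - φ x ^ 3 * φ z ^ 2 * dl a z * dl b x * dl c y * (φ z - φ x)⁻¹ + φ x ^ 3 * φ z ^ 2 * dl a x * dl b x * dl c z * (φ z - φ x)⁻¹ - φ x ^ 3 * φ z ^ 2 * dl a x * dl b x * dl c y * (φ z - φ x)⁻¹ + φ x ^ 3 * φ y * dl a x * dl b y * dl c z - φ x ^ 3 * φ y * dl a x * dl b y * dl c y - φ x ^ 3 * φ y * dl a x * dl b x * dl c z + φ x ^ 3 * φ y * dl a x * dl b x * dl c y - φ x ^ 3 * φ y * φ z * dl a z * dl b y * dl c z * (φ z - φ x)⁻¹ + φ x ^ 3 * φ y * φ z * dl a z * dl b y * dl c y * (φ z - φ x)⁻¹ - φ x ^ 3 * φ y * φ z * dl a x * dl b y * dl c z * (φ z - φ x)⁻¹ + φ x ^ 3 * φ y * φ z * dl a x * dl b y * dl c y * (φ z - φ x)⁻¹ + 2 *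 φ x ^ 3 * φ y * φ z * dl a x * dl b x * dl c z * (φ z - φ x)⁻¹ - 2 * φ x ^ 3 * φ y * φ z * dl a x * dl b x * dl c y * (φ z - φ x)⁻¹ - 2 * φ x ^ 3 * φ y ^ 2 * dl a x * dl b y * dl c z * (φ z - φ x)⁻¹ + 2 * φ x ^ 3 * φ y ^ 2 * dl a x * dl b y * dl c y * (φ z - φ x)⁻¹ - φ x ^ 4 * φ z * dl a x * dl b x * dl c z * (φ z - φ x)⁻¹ + φ x ^ 4 * φ z * dl a x * dl b x * dl c y * (φ z - φ x)⁻¹ + φ x ^ 4 * φ y * dl a x * dl b y * dl c z * (φ z - φ x)⁻¹ - φ x ^ 4 * φ y * dl a x * dl b y * dl c y * (φ z - φ x)⁻¹) * e2 + (φ y ^ 2 * φ z ^ 2 * dl a z * dl b y * dl c z - φ y ^ 2 * φ z ^ 2 * dl a z * dl b y * dl c x - φ y ^ 2 * φ z ^ 2 * dl a z * dl b x * dl c z + φ y ^ 2 * φ z ^ 2 * dl a z * dl b x * dl c y - φ y ^ 3 * φ z * dl a z * dl b y * dl c y + φ y ^ 3 * φ z * dl a z * dl b y * dl c x + φ y ^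 3 * φ z ^ 2 * dl a z * dl b y * dl c y * (φ x - φ y)⁻¹ - φ y ^ 3 * φ z ^ 2 * dl a z * dl b y * dl c x * (φ x - φ y)⁻¹ - φ y ^ 4 * φ z * dl a z * dl b y * dl c y * (φ x - φ y)⁻¹ + φ y ^ 4 * φ z * dl a z * dl b y * dl c x * (φ x - φ y)⁻¹ - φ x * φ y * φ z ^ 2 * dl a z * dl b y * dl c z + φ x * φ y * φ z ^ 2 * dl a z * dl b y * dl c x + φ x * φ y * φ z ^ 2 * dl a z * dl b x * dl c z - 2 * φ x * φ y * φ z ^ 2 * dl a z * dl b x * dl c y + φ x * φ y * φ z ^ 2 * dl a z * dl b x * dl c x - φ x * φ y ^ 2 * φ z * dl a z * dl b y * dl c z + 2 * φ x * φ y ^ 2 * φ z * dl a z * dl b y * dl c y - φ x * φ y ^ 2 * φ z * dl a z * dl b y * dl c x + φ x * φ y ^ 2 * φ z * dl a z * dl b x * dl c z - φ x * φ y ^ 2 * φ z * dl a z * dl b x * dl c x - φ x * φ y ^ 2 * φ z * dl a x * dl b y * dl c z + φ x * φ y ^ 2 * φ z * dl a x * dl b y * dl c x + φ x * φ y ^ 2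 * φ z * dl a x * dl b x * dl c z - φ x * φ y ^ 2 * φ z * dl a x * dl b x * dl c y - 2 * φ x * φ y ^ 2 * φ z ^ 2 * dl a z * dl b y * dl c y * (φ x - φ y)⁻¹ + 2 * φ x * φ y ^ 2 * φ z ^ 2 * dl a z * dl b y * dl c x * (φ x - φ y)⁻¹ - φ x * φ y ^ 2 * φ z ^ 2 * dl a z * dl b x * dl c y * (φ x - φ y)⁻¹ + φ x * φ y ^ 2 * φ z ^ 2 * dl a z * dl b x * dl c x * (φ x - φ y)⁻¹ + φ x * φ y ^ 3 * dl a x * dl b y * dl c y - φ x * φ y ^ 3 * dl a x * dl b y * dl c x + 2 * φ x * φ y ^ 3 * φ z * dl a z * dl b y * dl c y * (φ x - φ y)⁻¹ - 2 * φ x * φ y ^ 3 * φ z * dl a z * dl b y * dl c x * (φ x - φ y)⁻¹ + φ x * φ y ^ 3 * φ z * dl a z * dl b x * dl c y * (φ x - φ y)⁻¹ - φ x * φ y ^ 3 * φ z * dl a z * dl b x * dl c x * (φ x - φ y)⁻¹ - φ x * φ y ^ 3 * φ z * dl a x * dl b y * dl c y * (φ x - φ y)⁻¹ + φ x * φ y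 ^ 3 * φ z * dl a x * dl b y * dl c x * (φ x - φ y)⁻¹ + φ x * φ y ^ 4 * dl a x * dl b y * dl c y * (φ x - φ y)⁻¹ - φ x * φ y ^ 4 * dl a x * dl b y * dl c x * (φ x - φ y)⁻¹ + φ x ^ 2 * φ z ^ 2 * dl a z * dl b x * dl c y - φ x ^ 2 * φ z ^ 2 * dl a z * dl b x * dl c x + φ x ^ 2 * φ y * φ z * dl a z * dl b y * dl c z - φ x ^ 2 * φ y * φ z * dl a z * dl b y * dl c y - φ x ^ 2 * φ y * φ z * dl a z * dl b x * dl c z + φ x ^ 2 * φ y * φ z * dl a z * dl b x * dl c x + φ x ^ 2 * φ y * φ z * dl a x * dl b y * dl c z - φ x ^ 2 * φ y * φ z * dl a x * dl b y * dl c x - φ x ^ 2 * φ y * φ z * dl a x * dl b x * dl c z + 2 * φ x ^ 2 * φ y * φ z * dl a x * dl b x * dl c y - φ x ^ 2 * φ y * φ z * dl a x * dl b x * dl c x + φ x ^ 2 * φ y * φ z ^ 2 * dl a z * dl b y * dl c y * (φ x - φ y)⁻¹ - φ x ^ 2 * φ y * φ z ^ 2 * dl a z * dl b y * dl c x * (φ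 x - φ y)⁻¹ + 2 * φ x ^ 2 * φ y * φ z ^ 2 * dl a z * dl b x * dl c y * (φ x - φ y)⁻¹ - 2 * φ x ^ 2 * φ y * φ z ^ 2 * dl a z * dl b x * dl c x * (φ x - φ y)⁻¹ + φ x ^ 2 * φ y ^ 2 * dl a x * dl b y * dl c z - 2 * φ x ^ 2 * φ y ^ 2 * dl a x * dl b y * dl c y + φ x ^ 2 * φ y ^ 2 * dl a x * dl b y * dl c x - φ x ^ 2 * φ y ^ 2 * dl a x * dl b x * dl c z + φ x ^ 2 * φ y ^ 2 * dl a x * dl b x * dl c x - φ x ^ 2 * φ y ^ 2 * φ z * dl a z * dl b y * dl c y * (φ x - φ y)⁻¹ + φ x ^ 2 * φ y ^ 2 * φ z * dl a z * dl b y * dl c x * (φ x - φ y)⁻¹ - 2 * φ x ^ 2 * φ y ^ 2 * φ z * dl a z * dl b x * dl c y * (φ x - φ y)⁻¹ + 2 * φ x ^ 2 * φ y ^ 2 * φ z * dl a z * dl b x * dl c x * (φ x - φ y)⁻¹ + 2 * φ x ^ 2 * φ y ^ 2 * φ z * dl a x * dl b y * dl c y * (φ x - φ y)⁻¹ - 2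 * φ x ^ 2 * φ y ^ 2 * φ z * dl a x * dl b y * dl c x * (φ x - φ y)⁻¹ + φ x ^ 2 * φ y ^ 2 * φ z * dl a x * dl b x * dl c y * (φ x - φ y)⁻¹ - φ x ^ 2 * φ y ^ 2 * φ z * dl a x * dl b x * dl c x * (φ x - φ y)⁻¹ - 2 * φ x ^ 2 * φ y ^ 3 * dl a x * dl b y * dl c y * (φ x - φ y)⁻¹ + 2 * φ x ^ 2 * φ y ^ 3 * dl a x * dl b y * dl c x * (φ x - φ y)⁻¹ - φ x ^ 2 * φ y ^ 3 * dl a x * dl b x * dl c y * (φ x - φ y)⁻¹ + φ x ^ 2 * φ y ^ 3 * dl a x * dl b x * dl c x * (φ x - φ y)⁻¹ - φ x ^ 3 * φ z * dl a x * dl b x * dl c y + φ x ^ 3 * φ z * dl a x * dl b x * dl c x - φ x ^ 3 * φ z ^ 2 * dl a z * dl b x * dl c y * (φ x - φ y)⁻¹ + φ x ^ 3 * φ z ^ 2 * dl a z * dl b x * dl c x * (φ x - φ y)⁻¹ - φ x ^ 3 * φ y * dl a x * dl b y * dl c z + φ x ^ 3 * φ y * dl a x * dl b y * dl c y + φ x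 ^ 3 * φ y * dl a x * dl b x * dl c z - φ x ^ 3 * φ y * dl a x * dl b x * dl c x + φ x ^ 3 * φ y * φ z * dl a z * dl b x * dl c y * (φ x - φ y)⁻¹ - φ x ^ 3 * φ y * φ z * dl a z * dl b x * dl c x * (φ x - φ y)⁻¹ - φ x ^ 3 * φ y * φ z * dl a x * dl b y * dl c y * (φ x - φ y)⁻¹ + φ x ^ 3 * φ y * φ z * dl a x * dl b y * dl c x * (φ x - φ y)⁻¹ - 2 * φ x ^ 3 * φ y * φ z * dl a x * dl b x * dl c y * (φ x - φ y)⁻¹ + 2 * φ x ^ 3 * φ y * φ z * dl a x * dl b x * dl c x * (φ x - φ y)⁻¹ + φ x ^ 3 * φ y ^ 2 * dl a x * dl b y * dl c y * (φ x - φ y)⁻¹ - φ x ^ 3 * φ y ^ 2 * dl a x * dl b y * dl c x * (φ x - φ y)⁻¹ + 2 * φ x ^ 3 * φ y ^ 2 * dl a x * dl b x * dl c y * (φ x - φ y)⁻¹ - 2 * φ x ^ 3 * φ y ^ 2 * dl a x * dl b x * dl c x * (φ x - φ y)⁻¹ + φ x ^ 4 * φ z * dl a x * dl b x * dl c y * (φ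 x - φ y)⁻¹ - φ x ^ 4 * φ z * dl a x * dl b x * dl c x * (φ x - φ y)⁻¹ - φ x ^ 4 * φ y * dl a x * dl b x * dl c y * (φ x - φ y)⁻¹ + φ x ^ 4 * φ y * dl a x * dl b x * dl c x * (φ x - φ y)⁻¹) * e3 + (-φ y ^ 2 * φ z ^ 2 * dl a z * dl b y * dl c y + φ y ^ 2 * φ z ^ 2 * dl a z * dl b y * dl c x + φ y ^ 3 * φ z * dl a z * dl b y * dl c y - φ y ^ 3 * φ z * dl a z * dl b y * dl c x + φ x * φ y * φ z ^ 2 * dl a z * dl b y * dl c y - φ x * φ y * φ z ^ 2 * dl a z * dl b y * dl c x + φ x * φ y * φ z ^ 2 * dl a z * dl b x * dl c y - φ x * φ y * φ z ^ 2 * dl a z * dl b x * dl c x - φ x * φ y ^ 2 * φ z * dl a z * dl b y * dl c y + φ x * φ y ^ 2 * φ z * dl a z * dl b y * dl c x - φ x * φ y ^ 2 * φ z * dl a z * dl b x * dl c y + φ x * φ y ^ 2 * φ z * dl a z * dl b x * dl c x + φ x * φ y ^ 2 * φ z * dl a x * dl b y * dl c y - φ x * φ y ^ 2 * φ z * dl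 a x * dl b y * dl c x - φ x * φ y ^ 3 * dl a x * dl b y * dl c y + φ x * φ y ^ 3 * dl a x * dl b y * dl c x - φ x ^ 2 * φ z ^ 2 * dl a z * dl b x * dl c y + φ x ^ 2 * φ z ^ 2 * dl a z * dl b x * dl c x + φ x ^ 2 * φ y * φ z * dl a z * dl b x * dl c y - φ x ^ 2 * φ y * φ z * dl a z * dl b x * dl c x - φ x ^ 2 * φ y * φ z * dl a x * dl b y * dl c y + φ x ^ 2 * φ y * φ z * dl a x * dl b y * dl c x - φ x ^ 2 * φ y * φ z * dl a x * dl b x * dl c y + φ x ^ 2 * φ y * φ z * dl a x * dl b x * dl c x + φ x ^ 2 * φ y ^ 2 * dl a x * dl b y * dl c y - φ x ^ 2 * φ y ^ 2 * dl a x * dl b y * dl c x + φ x ^ 2 * φ y ^ 2 * dl a x * dl b x * dl c y - φ x ^ 2 * φ y ^ 2 * dl a x * dl b x * dl c x + φ x ^ 3 * φ z * dl a x * dl b x * dl c y - φ x ^ 3 * φ z * dl a x * dl b x * dl c x - φ x ^ 3 * φ y * dl a x * dl b x * dl c y + φ x ^ 3 * φ y * dl a x * dl b x * dl c x) * e4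

lemma sum_ite_const {α : Type*} [Fintype α] (p : Prop) [Decidable p] (f : α → ℂ) :
    (∑ x : α, if p then f x else 0) = if p then ∑ x : α, f x else 0 := by
  split_ifs <;> simp

lemma rPhi_apply (n : ℕ) (φ : Fin n → ℂ) (a b c d : Fin n) :
    rPhi n φ (a, b) (c, d) = Rm n φ a b c d := by
  unfold rPhi
  rw [Matrix.sum_apply]
  rw [Finset.sum_eq_single d]
  · rw [Matrix.sum_apply, Finset.sum_eq_single c]
    · by_cases hdc : d = c
      · simp [hdc, Rm, eq_comm]
      · simp [Rm, dl, hdc, Ne.symm hdc, single, eq_comm]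
        ring
    · intro j _ hj
      by_cases hdj : d = j
      · simp [hdj]
      · simp [hdj, single, hj, (Ne.symm hj : ¬ c = j)]
    · simp
  · intro i _ hi
    rw [Matrix.sum_apply]
    apply Finset.sum_eq_zero
    intro j _
    by_cases hij : i = j
    · simp [hij]
    · simp [hij, single, hi]
  · simp

/-- `r` satisfies the non-homogeneous associative classical Yang–Baxter equation
`r¹³ r¹² - r¹² r²³ + r²³ r¹³ = -r¹³`. -/
theorem rPhi_nonhomogeneous_acYB (n : ℕ) (φ : Fin n → ℂ)
    (h0 : ∀ i, φ i ≠ 0) (hd : ∀ i j, i ≠ j → φ i ≠ φ j) :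
    op13 n (rPhi n φ) * op12 n (rPhi n φ) - op12 n (rPhi n φ) * op23 n (rPhi n φ)
      + op23 n (rPhi n φ) * op13 n (rPhi n φ) = -(op13 n (rPhi n φ)) := by
  ext ⟨a, b, c⟩ ⟨x, y, z⟩
  simp only [Matrix.sub_apply, Matrix.add_apply, Matrix.neg_apply, Matrix.mul_apply,
    op12, op13, op23, rPhi_apply, Fintype.sum_prod_type]
  simp only [mul_ite, ite_mul, mul_zero, zero_mul, mul_one, one_mul, sum_ite_const,
    Finset.sum_ite_eq, Finset.sum_ite_eq', Finset.mem_univ, if_true]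
  rw [key hd a b c x y z]
  simp [dl]
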